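/- Let A₁ and A₂ be N×N real matrices, each with nonnegative off-diagonal entries and zero column sums, and let τ > 0. Then the AOS step matrix M = (1/2)·[(I − 2τA₁)^{-1} + (I − 2τA₂)^{-1}] has all entries nonnegative and every column of M sums to 1. Consequently, the AOS iteration u^{k+1} = M u^k preserves the sum of the entries of u, maps nonnegative vectors to nonnegative vectors, and is nonexpansive in the ℓ¹ norm, for every time step τ > 0 (unconditional stability of AOS). -/
import Mathlib

/-- Minimum principle: if `C` has nonpositive off-diagonal entries and row sums `1`,
and `C.mulVec x` is nonnegative, then `x` is nonnegative. -/
lemma aos_min_principle (N : ℕ) (C : Matrix (Fin N) (Fin N) ℝ)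
    (hoff : ∀ i j, i ≠ j → C i j ≤ 0) (hrow : ∀ i, ∑ j, C i j = 1)
    (x : Fin N → ℝ) (hb : ∀ i, 0 ≤ C.mulVec x i) : ∀ i, 0 ≤ x i := by
  intro i
  obtain ⟨m, -, hm⟩ := Finset.exists_min_image Finset.univ x ⟨i, Finset.mem_univ i⟩
  have hmx : ∀ j, x m ≤ x j := fun j => hm j (Finset.mem_univ j)
  have h1 : C.mulVec x m ≤ x m := by
    have hdef : C.mulVec x m = ∑ k, C m k * x k := rfl
    rw [hdef]
    calc ∑ k, C m k * x k ≤ ∑ k, C m k * x m := by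
          apply Finset.sum_le_sum
          intro k _
          rcases eq_or_ne m k with h | h
          · subst h; exact le_rfl
          · exact mul_le_mul_of_nonpos_left (hmx k) (hoff m k h)
      _ = (∑ k, C m k) * x m := (Finset.sum_mul _ _ _).symm
      _ = x m := by rw [hrow]; ring
  exact le_trans (le_trans (hb m) h1) (hmx i)

lemma aos_det_isUnit (N : ℕ) (C : Matrix (Fin N) (Fin N) ℝ)
    (hoff : ∀ i j, i ≠ j → C i j ≤ 0) (hrow : ∀ i, ∑ j, C i j = 1) :
    IsUnit C.det := by
  rw [isUnit_iff_ne_zero]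
  intro hdet
  obtain ⟨v, hv, hCv⟩ := (Matrix.exists_mulVec_eq_zero_iff (M := C)).mpr hdet
  have h1 : ∀ i, 0 ≤ v i :=
    aos_min_principle N C hoff hrow v (by intro i; rw [hCv]; exact le_rfl)
  have h2 : ∀ i, 0 ≤ -v i := by
    apply aos_min_principle N C hoff hrow (-v)
    intro i
    rw [Matrix.mulVec_neg, hCv]
    simp
  exact hv (funext fun i => by simp only [Pi.zero_apply]; linarith [h1 i, h2 i])

lemma aos_inv_nonneg (N : ℕ) (C : Matrix (Fin N) (Fin N) ℝ)
    (hoff : ∀ i j, i ≠ j → C i j ≤ 0) (hrow : ∀ i, ∑ j, C i j = 1) :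
    ∀ i j, 0 ≤ C⁻¹ i j := by
  intro i j
  have hmul := C.mul_nonsing_inv (aos_det_isUnit N C hoff hrow)
  apply aos_min_principle N C hoff hrow (fun i => C⁻¹ i j)
  intro k
  have hk : C.mulVec (fun i => C⁻¹ i j) k = (C * C⁻¹) k j := by
    simp [Matrix.mulVec, Matrix.mul_apply, dotProduct]
  rw [hk, hmul, Matrix.one_apply]
  split <;> norm_num

/-- For `B = I - (2τ)•A` with `A` having nonneg off-diagonals and zero column sums:
`B⁻¹` is entrywise nonnegative and has column sums 1. -/
lemma aos_B_inv (N : ℕ) (A : Matrix (Fin N) (Fin N) ℝ)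
    (hoff : ∀ i j, i ≠ j → 0 ≤ A i j) (hsum : ∀ j, ∑ i, A i j = 0)
    (τ : ℝ) (hτ : 0 < τ) :
    (∀ i j, 0 ≤ ((1 : Matrix (Fin N) (Fin N) ℝ) - (2 * τ) • A)⁻¹ i j) ∧
    (∀ j, ∑ i, ((1 : Matrix (Fin N) (Fin N) ℝ) - (2 * τ) • A)⁻¹ i j = 1) := by
  set B : Matrix (Fin N) (Fin N) ℝ := (1 : Matrix (Fin N) (Fin N) ℝ) - (2 * τ) • A with hB
  have hBapp : ∀ i j, B i j = (if i = j then (1:ℝ) else 0) - 2 * τ * A i j := by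
    intro i j
    simp [hB, Matrix.one_apply, Matrix.sub_apply, Matrix.smul_apply]
  -- column sums of B are 1
  have hcol : ∀ j, ∑ i, B i j = 1 := by
    intro j
    simp only [hBapp]
    rw [Finset.sum_sub_distrib]
    rw [Finset.sum_ite_eq' Finset.univ j (fun _ => (1:ℝ))]
    rw [← Finset.mul_sum, hsum j]
    simp
  -- transpose hypotheses
  have hoffT : ∀ i j, i ≠ j → B.transpose i j ≤ 0 := by
    intro i j hij
    rw [Matrix.transpose_apply, hBapp]
    have : 0 ≤ A j i := hoff j i (Ne.symm hij)
    rw [if_neg (Ne.symm hij)]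
    nlinarith
  have hrowT : ∀ i, ∑ j, B.transpose i j = 1 := by
    intro i
    simpa [Matrix.transpose_apply] using hcol i
  have hdetT := aos_det_isUnit N B.transpose hoffT hrowT
  have hdet : IsUnit B.det := by rwa [Matrix.det_transpose] at hdetT
  constructor
  · intro i j
    have h := aos_inv_nonneg N B.transpose hoffT hrowT j i
    rwa [← Matrix.transpose_nonsing_inv, Matrix.transpose_apply] at h
  · intro j
    have hmul := B.mul_nonsing_inv hdet
    have h1 : ∑ i, (B * B⁻¹) i j = 1 := by
      rw [hmul]
      simp [Matrix.one_apply, Finset.sum_ite_eq' Finset.univ j]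
    calc ∑ i, B⁻¹ i j = ∑ k, (∑ i, B i k) * B⁻¹ k j := by
          simp only [hcol, one_mul]
      _ = ∑ i, (B * B⁻¹) i j := by
          simp only [Matrix.mul_apply, Finset.sum_mul]
          rw [Finset.sum_comm]
      _ = 1 := h1

theorem aos_unconditional_stability (N : ℕ) (A₁ A₂ : Matrix (Fin N) (Fin N) ℝ)
    (hoff₁ : ∀ i j, i ≠ j → 0 ≤ A₁ i j) (hsum₁ : ∀ j, ∑ i, A₁ i j = 0)
    (hoff₂ : ∀ i j, i ≠ j → 0 ≤ A₂ i j) (hsum₂ : ∀ j, ∑ i, A₂ i j = 0)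
    (τ : ℝ) (hτ : 0 < τ)
    (M : Matrix (Fin N) (Fin N) ℝ)
    (hM : M = (1 / 2 : ℝ) • (((1 : Matrix (Fin N) (Fin N) ℝ) - (2 * τ) • A₁)⁻¹
      + ((1 : Matrix (Fin N) (Fin N) ℝ) - (2 * τ) • A₂)⁻¹)) :
    (∀ i j, 0 ≤ M i j) ∧
    (∀ j, ∑ i, M i j = 1) ∧
    (∀ u : Fin N → ℝ, ∑ i, M.mulVec u i = ∑ i, u i) ∧
    (∀ u : Fin N → ℝ, (∀ i, 0 ≤ u i) → ∀ i, 0 ≤ M.mulVec u i) ∧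
    (∀ u : Fin N → ℝ, ∑ i, |M.mulVec u i| ≤ ∑ i, |u i|) := by
  obtain ⟨h1nn, h1col⟩ := aos_B_inv N A₁ hoff₁ hsum₁ τ hτ
  obtain ⟨h2nn, h2col⟩ := aos_B_inv N A₂ hoff₂ hsum₂ τ hτ
  have hMapp : ∀ i j, M i j = (1/2 : ℝ) *
      (((1 : Matrix (Fin N) (Fin N) ℝ) - (2 * τ) • A₁)⁻¹ i j
        + ((1 : Matrix (Fin N) (Fin N) ℝ) - (2 * τ) • A₂)⁻¹ i j) := by
    intro i j
    rw [hM]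
    simp [Matrix.smul_apply, Matrix.add_apply]
  have hMnn : ∀ i j, 0 ≤ M i j := by
    intro i j
    rw [hMapp]
    have := h1nn i j
    have := h2nn i j
    linarith
  have hMcol : ∀ j, ∑ i, M i j = 1 := by
    intro j
    simp only [hMapp]
    rw [← Finset.mul_sum, Finset.sum_add_distrib, h1col j, h2col j]
    norm_num
  refine ⟨hMnn, hMcol, ?_, ?_, ?_⟩
  · intro u
    have : ∀ i, M.mulVec u i = ∑ j, M i j * u j := fun i => rfl
    simp only [this]
    rw [Finset.sum_comm]
    apply Finset.sum_congr rfl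
    intro j _
    rw [← Finset.sum_mul, hMcol j, one_mul]
  · intro u hu i
    have : M.mulVec u i = ∑ j, M i j * u j := rfl
    rw [this]
    exact Finset.sum_nonneg fun j _ => mul_nonneg (hMnn i j) (hu j)
  · intro u
    have hdef : ∀ i, M.mulVec u i = ∑ j, M i j * u j := fun i => rfl
    calc ∑ i, |M.mulVec u i| ≤ ∑ i, ∑ j, M i j * |u j| := by
          apply Finset.sum_le_sum
          intro i _
          rw [hdef]
          calc |∑ j, M i j * u j| ≤ ∑ j, |M i j * u j| := Finset.abs_sum_le_sum_abs _ _
            _ = ∑ j, M i j * |u j| := by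
                apply Finset.sum_congr rfl
                intro j _
                rw [abs_mul, abs_of_nonneg (hMnn i j)]
      _ = ∑ j, |u j| := by
          rw [Finset.sum_comm]
          apply Finset.sum_congr rfl
          intro j _
          rw [← Finset.sum_mul, hMcol j, one_mul]
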